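/- Any 1-cell ξ : i → j in the n-th oriental 𝒪(n) is either the empty set with i = j, or takes the form ξ = {(k_0 k_1), (k_1 k_2), ..., (k_{r-1} k_r)} for some chain i = k_0 < k_1 < ... < k_r = j in {0,...,n}. -/

import Mathlib

/-- The even faces of a set of edges: the set of second entries. -/
def ePos {n : ℕ} (ξ : Set (Fin (n+1) × Fin (n+1))) : Set (Fin (n+1)) := Prod.snd '' ξ

/-- The odd faces of a set of edges: the set of first entries. -/
def eNeg {n : ℕ} (ξ : Set (Fin (n+1) × Fin (n+1))) : Set (Fin (n+1)) := Prod.fst '' ξ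

/-- Well-formedness: distinct edges share no even face and no odd face. -/
def EWf {n : ℕ} (ξ : Set (Fin (n+1) × Fin (n+1))) : Prop :=
  ∀ p ∈ ξ, ∀ q ∈ ξ, p ≠ q → p.2 ≠ q.2 ∧ p.1 ≠ q.1

/-- `ξ` moves `i` to `j`. -/
def EMoves {n : ℕ} (ξ : Set (Fin (n+1) × Fin (n+1))) (i j : Fin (n+1)) : Prop :=
  ({j} : Set (Fin (n+1))) = ({i} ∪ ePos ξ) \ eNeg ξ ∧
  ({i} : Set (Fin (n+1))) = ({j} ∪ eNeg ξ) \ ePos ξ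

/-- `ξ` is a 1-cell `i → j` of the oriental `𝒪(n)`. -/
def IsOneCell {n : ℕ} (ξ : Set (Fin (n+1) × Fin (n+1))) (i j : Fin (n+1)) : Prop :=
  (∀ p ∈ ξ, p.1 < p.2) ∧ EWf ξ ∧ EMoves ξ i j

private lemma strictMono_fin_cases {α : Type*} [Preorder α] {m : ℕ} {a : α}
    {f : Fin (m+1) → α} (hf : StrictMono f) (h : a < f 0) :
    StrictMono (Fin.cases a f : Fin (m+2) → α) := by
  refine Fin.strictMono_iff_lt_succ.mpr ?_
  intro s
  induction s using Fin.cases with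
  | zero => simpa only [Fin.castSucc_zero, Fin.cases_zero, Fin.cases_succ] using h
  | succ s =>
      have h1 : (Fin.succ s).castSucc = Fin.succ s.castSucc :=
        (Fin.succ_castSucc s).symm
      rw [h1, Fin.cases_succ, Fin.cases_succ]
      exact hf Fin.castSucc_lt_succ

private lemma oriental_aux (n : ℕ) :
    ∀ (m : ℕ) (i j : Fin (n+1)) (ξ : Set (Fin (n+1) × Fin (n+1))),
      ξ.ncard = m → IsOneCell ξ i j →
    (ξ = ∅ ∧ i = j) ∨
    ∃ (r : ℕ) (k : Fin (r+2) → Fin (n+1)), StrictMono k ∧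
      k 0 = i ∧ k (Fin.last (r+1)) = j ∧
      ξ = ⋃ t : Fin (r+1), {(k t.castSucc, k t.succ)} := by
  intro m
  induction m with
  | zero =>
      intro i j ξ hcard hcell
      obtain ⟨hlt, hwf, hmv1, hmv2⟩ := hcell
      have hξ : ξ = ∅ := ((Set.ncard_eq_zero (Set.toFinite ξ)).mp hcard)
      subst hξ
      left
      refine ⟨rfl, ?_⟩
      have := hmv1
      simp [ePos, eNeg] at this
      exact this.symm
  | succ m ih =>
      intro i j ξ hcard hcell
      obtain ⟨hlt, hwf, hmv1, hmv2⟩ := hcell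
      -- pointwise versions of the move equations
      have h1 : ∀ x, x = j ↔ (x = i ∨ x ∈ ePos ξ) ∧ x ∉ eNeg ξ := by
        intro x
        have := Set.ext_iff.mp hmv1 x
        simpa [Set.mem_diff, eq_comm] using this
      have h2 : ∀ x, x = i ↔ (x = j ∨ x ∈ eNeg ξ) ∧ x ∉ ePos ξ := by
        intro x
        have := Set.ext_iff.mp hmv2 x
        simpa [Set.mem_diff, eq_comm] using this
      have hiP : i ∉ ePos ξ := ((h2 i).mp rfl).2
      have hjN : j ∉ eNeg ξ := ((h1 j).mp rfl).2
      have hPN : ∀ x ∈ ePos ξ, x ∉ eNeg ξ → x = j :=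
        fun x hx hn => (h1 x).mpr ⟨Or.inr hx, hn⟩
      have hNP : ∀ x ∈ eNeg ξ, x ∉ ePos ξ → x = i :=
        fun x hx hn => (h2 x).mpr ⟨Or.inr hx, hn⟩
      -- ξ is nonempty, so eNeg ξ is nonempty; its minimum is i
      have hξne : ξ.Nonempty := by
        refine Set.nonempty_iff_ne_empty.mpr ?_
        intro h
        rw [h] at hcard
        simp at hcard
      have hNne : (eNeg ξ).Nonempty := hξne.image _
      obtain ⟨m0, hm0N, hm0min⟩ :=
        Set.exists_min_image (eNeg ξ) id (Set.toFinite _) hNne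
      have hm0i : m0 = i := by
        by_contra hne
        have hm0P : m0 ∈ ePos ξ := by
          by_contra hP
          exact hne (hNP m0 hm0N hP)
        obtain ⟨p, hpξ, hp2⟩ := hm0P
        have h3 : p.1 ∈ eNeg ξ := ⟨p, hpξ, rfl⟩
        have h4 : p.1 < m0 := hp2 ▸ hlt p hpξ
        exact absurd (hm0min p.1 h3) (by simpa using h4)
      obtain ⟨p, hpξ, hp1⟩ := hm0i ▸ hm0N
      set b := p.2 with hb
      have hp : (i, b) ∈ ξ := by
        have : p = (i, b) := by
          rw [← hp1]
        rwa [← this]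
      have hib : i < b := hlt (i, b) hp
      have hbP : b ∈ ePos ξ := ⟨(i, b), hp, rfl⟩
      have hiN : i ∈ eNeg ξ := ⟨(i, b), hp, rfl⟩
      have hij : i ≠ j := fun h => hjN (h ▸ hiN)
      have hjP : j ∈ ePos ξ := by
        rcases ((h1 j).mp rfl).1 with h | h
        · exact absurd h.symm hij
        · exact h
      -- the reduced 1-cell
      set ξ' : Set (Fin (n+1) × Fin (n+1)) := ξ \ {(i, b)} with hξ'
      have hP' : ∀ x, x ∈ ePos ξ' ↔ x ∈ ePos ξ ∧ x ≠ b := by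
        intro x
        constructor
        · rintro ⟨q, ⟨hqξ, hqne⟩, hq2⟩
          refine ⟨⟨q, hqξ, hq2⟩, ?_⟩
          intro hxb
          have hqne' : q ≠ (i, b) := by simpa using hqne
          exact (hwf q hqξ (i, b) hp hqne').1 (hq2.trans hxb)
        · rintro ⟨⟨q, hqξ, hq2⟩, hxb⟩
          refine ⟨q, ⟨hqξ, ?_⟩, hq2⟩
          simp only [Set.mem_singleton_iff]
          intro hq
          exact hxb (by rw [← hq2, hq])
      have hN' : ∀ x, x ∈ eNeg ξ' ↔ x ∈ eNeg ξ ∧ x ≠ i := by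
        intro x
        constructor
        · rintro ⟨q, ⟨hqξ, hqne⟩, hq1⟩
          refine ⟨⟨q, hqξ, hq1⟩, ?_⟩
          intro hxi
          have hqne' : q ≠ (i, b) := by simpa using hqne
          exact (hwf q hqξ (i, b) hp hqne').2 (hq1.trans hxi)
        · rintro ⟨⟨q, hqξ, hq1⟩, hxi⟩
          refine ⟨q, ⟨hqξ, ?_⟩, hq1⟩
          simp only [Set.mem_singleton_iff]
          intro hq
          exact hxi (by rw [← hq1, hq])
      have hcard' : ξ'.ncard = m := by
        have := Set.ncard_diff_singleton_of_mem hp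
        rw [hξ', this, hcard]
        omega
      have hcell' : IsOneCell ξ' b j := by
        refine ⟨fun q hq => hlt q hq.1, fun q hq q' hq' => hwf q hq.1 q' hq'.1, ?_, ?_⟩
        · ext x
          simp only [Set.mem_singleton_iff, Set.mem_diff, Set.mem_union, hP' x, hN' x]
          constructor
          · intro hx
            refine ⟨?_, fun h => hjN (by rw [← hx]; exact h.1)⟩
            by_cases hjb : x = b
            · exact Or.inl hjb
            · refine Or.inr ⟨by rw [hx]; exact hjP, hjb⟩
          · rintro ⟨h3, h4⟩
            have hxP : x ∈ ePos ξ := h3.elim (fun e => by rw [e]; exact hbP) And.left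
            have hxi : x ≠ i := fun e => hiP (by rw [← e]; exact hxP)
            have hxN : x ∉ eNeg ξ := fun hn => h4 ⟨hn, hxi⟩
            exact hPN x hxP hxN
        · ext x
          simp only [Set.mem_singleton_iff, Set.mem_diff, Set.mem_union, hP' x, hN' x]
          constructor
          · intro hx
            refine ⟨?_, fun h => h.2 hx⟩
            by_cases hbj : x = j
            · exact Or.inl hbj
            · refine Or.inr ⟨?_, ?_⟩
              · rw [hx]
                by_contra hbN
                exact hbj (hx.trans (hPN b hbP hbN))
              · intro e
                rw [e] at hx
                exact absurd hib (by rw [← hx]; exact lt_irrefl i)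
          · rintro ⟨h3, h4⟩
            rcases h3 with hxj | ⟨hxN, hxi⟩
            · by_contra hxb
              exact h4 ⟨by rw [hxj]; exact hjP, hxb⟩
            · have hxP : x ∈ ePos ξ := by
                by_contra hxP
                exact hxi (hNP x hxN hxP)
              by_contra hxb
              exact h4 ⟨hxP, hxb⟩
      rcases ih b j ξ' hcard' hcell' with ⟨hempty, rfl⟩ | ⟨r, k, hk, hk0, hkl, hkξ⟩
      · -- ξ = {(i, b)} with b = j
        have hξs : ξ = {(i, b)} := by
          ext q
          constructor
          · intro hq
            by_cases hqe : q = (i, b)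
            · simp [hqe]
            · exact absurd (show q ∈ ξ' from ⟨hq, by simpa using hqe⟩)
                (by simp [hempty])
          · intro hq
            simp only [Set.mem_singleton_iff] at hq
            exact hq ▸ hp
        right
        refine ⟨0, ![i, b], ?_, by simp, by simp [Fin.last], ?_⟩
        · refine Fin.strictMono_iff_lt_succ.mpr ?_
          intro t
          fin_cases t
          simpa using hib
        · rw [hξs]
          ext q
          simp only [Set.mem_singleton_iff, Set.mem_iUnion]
          constructor
          · rintro rfl
            exact ⟨0, by simp⟩
          · rintro ⟨t, ht⟩
            fin_cases t
            simpa using ht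
      · -- prepend (i, b) to the chain
        right
        have hib' : i < k 0 := hk0 ▸ hib
        refine ⟨r + 1, Fin.cases i k, strictMono_fin_cases hk hib', by simp, ?_, ?_⟩
        · rw [show (Fin.last (r+1+1)) = (Fin.last (r+1)).succ from (Fin.succ_last _).symm]
          simp only [Fin.cases_succ, hkl]
        · have hξsplit : ξ = ξ' ∪ {(i, b)} := by
            ext q
            simp only [hξ', Set.mem_union, Set.mem_diff, Set.mem_singleton_iff]
            constructor
            · intro hq
              by_cases hqe : q = (i, b)
              · exact Or.inr hqe
              · exact Or.inl ⟨hq, hqe⟩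
            · rintro (⟨hq, _⟩ | rfl)
              · exact hq
              · exact hp
          rw [hξsplit, hkξ]
          ext q
          simp only [Set.mem_union, Set.mem_iUnion, Set.mem_singleton_iff]
          constructor
          · rintro (⟨s, hs⟩ | rfl)
            · refine ⟨s.succ, ?_⟩
              simp only [← Fin.succ_castSucc, Fin.cases_succ]
              exact hs
            · refine ⟨0, ?_⟩
              simp only [Fin.castSucc_zero, Fin.cases_zero, Fin.cases_succ, hk0]
          · rintro ⟨t, ht⟩
            induction t using Fin.cases with
            | zero =>
                right
                simp only [Fin.castSucc_zero, Fin.cases_zero, Fin.cases_succ, hk0] at ht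
                exact ht
            | succ s =>
                left
                refine ⟨s, ?_⟩
                simp only [← Fin.succ_castSucc, Fin.cases_succ] at ht
                exact ht

/-- Classification of 1-cells in the oriental `𝒪(n)`: every 1-cell `ξ : i → j`
is either empty (with `i = j`) or a strictly increasing chain of edges from
`i` to `j`. -/
theorem oriental_one_cell_classification (n : ℕ) (i j : Fin (n+1))
    (ξ : Set (Fin (n+1) × Fin (n+1))) (hcell : IsOneCell ξ i j) :
    (ξ = ∅ ∧ i = j) ∨
    ∃ (r : ℕ) (k : Fin (r+2) → Fin (n+1)), StrictMono k ∧
      k 0 = i ∧ k (Fin.last (r+1)) = j ∧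
      ξ = ⋃ t : Fin (r+1), {(k t.castSucc, k t.succ)} := by
  exact oriental_aux n ξ.ncard i j ξ rfl hcell
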